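/- Let V be an 𝔽₂-vector space and i, j, k, l natural numbers with k + l ≤ j. Then θ_{i+k, j−k, l} ∘ θ_{i,j,k} = ((k+l)! / (k! l!) mod 2) · θ_{i,j,k+l} as linear maps Λ^i(V) ⊗ Λ^j(V) → Λ^{i+k+l}(V) ⊗ Λ^{j−k−l}(V); i.e. the composite equals the binomial coefficient C(k+l, k) reduced mod 2 times θ_{i,j,k+l}. -/
import Mathlib


open scoped TensorProduct

noncomputable section

abbrev F2 := ZMod 2

variable {V : Type*} [AddCommGroup V] [Module F2 V]

/-- The wedge `x₁ ∧ ⋯ ∧ xₙ` of a family of vectors, as an element of the `n`-th exterior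
power `⋀[𝔽₂]^n V`. -/
def wedge (n : ℕ) (x : Fin n → V) : ⋀[F2]^n V :=
  ⟨ExteriorAlgebra.ιMulti F2 n x,
    ExteriorAlgebra.ιMulti_range F2 n (Set.mem_range_self x)⟩

/-- `IsTheta i j t θ` says that
`θ : Λ^i(V) ⊗ Λ^j(V) → Λ^a(V) ⊗ Λ^b(V)` (where `a = i + t` and `b = j − t`) is the map
`θ_{i,j,t}` determined on decomposables by
`x ⊗ (b₁ ∧ ⋯ ∧ b_j) ↦ Σ_{|S| = t} (x ∧ b_S) ⊗ b_{Sᶜ}`,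
the sum being over the `t`-element subsets `S` of `{1, …, j}` and `b_S` denoting the wedge
of the `b_s`, `s ∈ S`, in increasing order. -/
def IsTheta (i j t : ℕ) {a b : ℕ} (ha : i + t = a) (hb : j - t = b)
    (θ : (⋀[F2]^i V) ⊗[F2] (⋀[F2]^j V) →ₗ[F2] (⋀[F2]^a V) ⊗[F2] (⋀[F2]^b V)) : Prop :=
  ∀ (x : Fin i → V) (y : Fin j → V),
    θ (wedge i x ⊗ₜ wedge j y) =
      ∑ S ∈ (Finset.powersetCard t (Finset.univ : Finset (Fin j))).attach,
        wedge a (Fin.append x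
            (y ∘ (S.1.orderEmbOfFin (Finset.mem_powersetCard.mp S.2).2)) ∘ Fin.cast ha.symm)
          ⊗ₜ
        wedge b ((y ∘ ((S.1)ᶜ.orderEmbOfFin
            (by simp [Finset.card_compl, (Finset.mem_powersetCard.mp S.2).2]))) ∘
          Fin.cast hb.symm)

/-- `IsDTheta i j t Dθ` says that
`Dθ : Λ^a(V) ⊗ Λ^b(V) → Λ^i(V) ⊗ Λ^j(V)` (where `a = i + t` and `j = b + t`) is the dual
map `Dθ_{i,j,t}` determined on decomposables by
`(a₁ ∧ ⋯ ∧ a_{i+t}) ⊗ y ↦ Σ_{|S| = t} a_{Sᶜ} ⊗ (y ∧ a_S)`. -/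
def IsDTheta (i j t : ℕ) {a b : ℕ} (ha : i + t = a) (hb : b + t = j)
    (Dθ : (⋀[F2]^a V) ⊗[F2] (⋀[F2]^b V) →ₗ[F2] (⋀[F2]^i V) ⊗[F2] (⋀[F2]^j V)) : Prop :=
  ∀ (x : Fin a → V) (y : Fin b → V),
    Dθ (wedge a x ⊗ₜ wedge b y) =
      ∑ S ∈ (Finset.powersetCard t (Finset.univ : Finset (Fin a))).attach,
        wedge i ((x ∘ ((S.1)ᶜ.orderEmbOfFin
            (by simp [Finset.card_compl, (Finset.mem_powersetCard.mp S.2).2]))) ∘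
          Fin.cast (by omega : i = a - t))
          ⊗ₜ
        wedge j (Fin.append y
            (x ∘ (S.1.orderEmbOfFin (Finset.mem_powersetCard.mp S.2).2)) ∘ Fin.cast hb.symm)

namespace ThetaAux
set_option maxHeartbeats 1000000
set_option synthInstance.maxHeartbeats 1000000
open Finset
variable {V : Type*} [AddCommGroup V] [Module F2 V]

lemma wedge_perm (n : ℕ) (x : Fin n → V) (σ : Equiv.Perm (Fin n)) :
    wedge n (x ∘ σ) = wedge n x := by
  apply Subtype.ext
  show ExteriorAlgebra.ιMulti F2 n (x ∘ σ) = ExteriorAlgebra.ιMulti F2 n x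
  rw [AlternatingMap.map_perm]
  rcases Int.units_eq_one_or (Equiv.Perm.sign σ) with h | h
  · rw [h, one_smul]
  · rw [h]
    set m := ExteriorAlgebra.ιMulti F2 n x
    have h2 : m + m = 0 := by
      have : ((2 : F2)) • m = m + m := by rw [two_smul]
      rw [← this, show (2 : F2) = 0 from rfl, zero_smul]
    have : (-1 : ℤˣ) • m = -m := by simp
    rw [this]
    exact neg_eq_of_add_eq_zero_left h2

lemma wedge_comp_cast_perm {m n : ℕ} (h : m = n) (f : Fin m → V) (σ : Equiv.Perm (Fin m)) :
    wedge n ((f ∘ σ) ∘ Fin.cast h.symm) = wedge n (f ∘ Fin.cast h.symm) := by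
  subst h
  exact wedge_perm _ f σ

lemma wedge_span (n : ℕ) : Submodule.span F2 (Set.range (wedge (V := V) n)) = ⊤ := by
  rw [Submodule.eq_top_iff']
  intro u
  have h : (u : ExteriorAlgebra F2 V) ∈
      Submodule.span F2 (Set.range (ExteriorAlgebra.ιMulti F2 n)) := by
    rw [ExteriorAlgebra.ιMulti_span_fixedDegree]; exact u.2
  have hle : Submodule.span F2 (Set.range (ExteriorAlgebra.ιMulti F2 n (M := V))) ≤
      (Submodule.span F2 (Set.range (wedge (V := V) n))).map (⋀[F2]^n V).subtype := by
    rw [Submodule.span_le]; rintro _ ⟨z, rfl⟩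
    exact ⟨wedge n z, Submodule.subset_span ⟨z, rfl⟩, rfl⟩
  obtain ⟨w, hw, hw2⟩ := hle h
  have : w = u := Subtype.ext hw2
  rwa [← this]

lemma ext_of_wedge {W : Type*} [AddCommGroup W] [Module F2 W] {i j : ℕ}
    {f g : (⋀[F2]^i V) ⊗[F2] (⋀[F2]^j V) →ₗ[F2] W}
    (h : ∀ x y, f (wedge i x ⊗ₜ wedge j y) = g (wedge i x ⊗ₜ wedge j y)) : f = g := by
  apply TensorProduct.ext'
  intro u v
  have hu : u ∈ Submodule.span F2 (Set.range (wedge (V := V) i)) := by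
    rw [wedge_span]; trivial
  induction hu using Submodule.span_induction with
  | mem u hu =>
    obtain ⟨x, rfl⟩ := hu
    have hv : v ∈ Submodule.span F2 (Set.range (wedge (V := V) j)) := by
      rw [wedge_span]; trivial
    induction hv using Submodule.span_induction with
    | mem v hv => obtain ⟨y, rfl⟩ := hv; exact h x y
    | zero => rw [TensorProduct.tmul_zero, map_zero, map_zero]
    | add v w _ _ hv hw => rw [TensorProduct.tmul_add, map_add, map_add, hv, hw]
    | smul a v _ hv => rw [TensorProduct.tmul_smul, map_smul, map_smul, hv]
  | zero => rw [TensorProduct.zero_tmul, map_zero, map_zero]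
  | add u w _ _ hu hw => rw [TensorProduct.add_tmul, map_add, map_add, hu, hw]
  | smul a u _ hu => rw [← TensorProduct.smul_tmul', map_smul, map_smul, hu]

lemma card_compl_eq {j t : ℕ} {U : Finset (Fin j)} (h : U.card = t) : Uᶜ.card = j - t := by
  rw [Finset.card_compl, h, Fintype.card_fin]

/-- The summand of a theta map, with the cardinality hypothesis explicit. -/
def thetaTermC (i j t : ℕ) (a b : ℕ) (ha : i + t = a) (hb : j - t = b)
    (x : Fin i → V) (y : Fin j → V) (U : Finset (Fin j)) (hU : U.card = t) :
    (⋀[F2]^a V) ⊗[F2] (⋀[F2]^b V) :=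
  wedge a (Fin.append x (y ∘ (U.orderEmbOfFin hU)) ∘ Fin.cast ha.symm) ⊗ₜ
  wedge b ((y ∘ (Uᶜ.orderEmbOfFin (card_compl_eq hU))) ∘ Fin.cast hb.symm)

/-- The summand of a theta map, as a total function of the subset. -/
def thetaTerm (i j t : ℕ) (a b : ℕ) (ha : i + t = a) (hb : j - t = b)
    (x : Fin i → V) (y : Fin j → V) (U : Finset (Fin j)) :
    (⋀[F2]^a V) ⊗[F2] (⋀[F2]^b V) :=
  if hU : U.card = t then thetaTermC i j t a b ha hb x y U hU else 0

lemma thetaTerm_eq {i j t a b : ℕ} {ha : i + t = a} {hb : j - t = b}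
    {x : Fin i → V} {y : Fin j → V} {U : Finset (Fin j)} (hU : U.card = t) :
    thetaTerm i j t a b ha hb x y U = thetaTermC i j t a b ha hb x y U hU :=
  dif_pos hU

lemma isTheta_sum {i j t a b : ℕ} {ha : i + t = a} {hb : j - t = b}
    {θ : (⋀[F2]^i V) ⊗[F2] (⋀[F2]^j V) →ₗ[F2] (⋀[F2]^a V) ⊗[F2] (⋀[F2]^b V)}
    (hθ : IsTheta i j t ha hb θ) (x : Fin i → V) (y : Fin j → V) :
    θ (wedge i x ⊗ₜ wedge j y) =
      ∑ U ∈ Finset.powersetCard t (Finset.univ : Finset (Fin j)),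
        thetaTerm i j t a b ha hb x y U := by
  rw [hθ x y, ← Finset.sum_attach (Finset.powersetCard t Finset.univ)
    (fun U => thetaTerm i j t a b ha hb x y U)]
  refine Finset.sum_congr rfl fun S _ => ?_
  rw [thetaTerm_eq (ha := ha) (hb := hb) (x := x) (y := y)
    ((Finset.mem_powersetCard.mp S.2).2)]
  rfl

lemma comp_append {α β : Type*} {m n : ℕ} (f : α → β) (a : Fin m → α) (b : Fin n → α) :
    f ∘ Fin.append a b = Fin.append (f ∘ a) (f ∘ b) := by
  funext v
  refine Fin.addCases (fun p => ?_) (fun p => ?_) v <;>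
    simp [Fin.append_left, Fin.append_right]

/-- Permuting the right block of an append. -/
lemma append_comp_perm {α : Type*} {m n : ℕ} (a : Fin m → α) (b : Fin n → α)
    (π : Equiv.Perm (Fin n)) :
    ∃ σ : Equiv.Perm (Fin (m + n)), Fin.append a (b ∘ π) = Fin.append a b ∘ σ := by
  refine ⟨(finSumFinEquiv.symm.trans
    ((Equiv.sumCongr (Equiv.refl (Fin m)) π).trans finSumFinEquiv)), ?_⟩
  funext v
  refine Fin.addCases (fun p => ?_) (fun p => ?_) v
  · simp [Fin.append_left]
  · simp [Fin.append_right]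

/-- Two injections of `Fin n` with the same range differ by a permutation. -/
lemma exists_perm_comp {α : Type*} {n : ℕ} (f g : Fin n → α)
    (hf : Function.Injective f) (hg : Function.Injective g)
    (hr : Set.range f = Set.range g) :
    ∃ π : Equiv.Perm (Fin n), f = g ∘ π := by
  refine ⟨(Equiv.ofInjective f hf).trans
    ((Equiv.setCongr hr).trans (Equiv.ofInjective g hg).symm), ?_⟩
  funext v
  simp only [Function.comp_apply, Equiv.trans_apply]
  rw [Equiv.apply_ofInjective_symm hg]
  rfl

lemma range_append {α : Type*} {m n : ℕ} (a : Fin m → α) (b : Fin n → α) :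
    Set.range (Fin.append a b) = Set.range a ∪ Set.range b := by
  ext v
  constructor
  · rintro ⟨w, rfl⟩
    induction w using Fin.addCases with
    | left p => rw [Fin.append_left]; exact Or.inl ⟨p, rfl⟩
    | right p => rw [Fin.append_right]; exact Or.inr ⟨p, rfl⟩
  · rintro (⟨p, rfl⟩ | ⟨p, rfl⟩)
    · exact ⟨Fin.castAdd _ p, Fin.append_left _ _ _⟩
    · exact ⟨Fin.natAdd _ p, Fin.append_right _ _ _⟩

lemma append_injective {α : Type*} {m n : ℕ} {a : Fin m → α} {b : Fin n → α}
    (ha : Function.Injective a) (hb : Function.Injective b)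
    (hd : ∀ p q, a p ≠ b q) : Function.Injective (Fin.append a b) := by
  intro v w h
  induction v using Fin.addCases with
  | left p =>
    induction w using Fin.addCases with
    | left q =>
      rw [Fin.append_left, Fin.append_left] at h
      exact congrArg _ (ha h)
    | right q =>
      rw [Fin.append_left, Fin.append_right] at h
      exact (hd p q h).elim
  | right p =>
    induction w using Fin.addCases with
    | left q =>
      rw [Fin.append_right, Fin.append_left] at h
      exact (hd q p h.symm).elim
    | right q =>
      rw [Fin.append_right, Fin.append_right] at h
      exact congrArg _ (hb h)

lemma key {i j k l : ℕ} (x : Fin i → V) (y : Fin j → V)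
    (S : Finset (Fin j)) (hS : S.card = k) (T : Finset (Fin (j - k))) (hT : T.card = l)
    (h₁ : i + (k + l) = i + k + l) (h₂ : j - (k + l) = j - k - l)
    (hU : (S ∪ T.map (Sᶜ.orderEmbOfFin (card_compl_eq hS)).toEmbedding).card = k + l) :
    thetaTermC (i + k) (j - k) l (i + k + l) (j - k - l) rfl rfl
      (Fin.append x (y ∘ (S.orderEmbOfFin hS)))
      (y ∘ (Sᶜ.orderEmbOfFin (card_compl_eq hS))) T hT
    = thetaTermC i j (k + l) (i + k + l) (j - k - l) h₁ h₂ x y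
        (S ∪ T.map (Sᶜ.orderEmbOfFin (card_compl_eq hS)).toEmbedding) hU := by
  set e := Sᶜ.orderEmbOfFin (card_compl_eq hS) with he
  set U := S ∪ T.map e.toEmbedding with hUdef
  set eS := S.orderEmbOfFin hS with heS
  set eT := T.orderEmbOfFin hT with heT
  set eU := U.orderEmbOfFin hU with heU
  set cT := Tᶜ.orderEmbOfFin (card_compl_eq hT) with hcT
  set cU := Uᶜ.orderEmbOfFin (card_compl_eq hU) with hcU
  -- membership facts
  have hmem_e : ∀ v, e v ∈ Sᶜ := fun v => Finset.orderEmbOfFin_mem _ _ v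
  have hmem_notU : ∀ w : Fin (j - k), w ∈ Tᶜ → e w ∈ Uᶜ := by
    intro w hw
    rw [Finset.mem_compl, hUdef, Finset.mem_union]
    push_neg
    constructor
    · exact Finset.mem_compl.mp (hmem_e w)
    · intro hmap
      obtain ⟨t, ht, het⟩ := Finset.mem_map.mp hmap
      have : t = w := e.injective het
      rw [this] at ht
      exact Finset.mem_compl.mp hw ht
  -- the second factors agree
  have hsnd : ∀ v : Fin (j - k - l), e (cT v) = cU (Fin.cast h₂.symm v) := by
    have hUc : Uᶜ.card = j - k - l := by
      rw [Finset.card_compl, hU, Fintype.card_fin]; omega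
    have e1 : (fun v : Fin (j - k - l) => e (cT v)) = Uᶜ.orderEmbOfFin hUc := by
      apply Finset.orderEmbOfFin_unique hUc
      · intro v; exact hmem_notU _ (Finset.orderEmbOfFin_mem _ _ v)
      · exact e.strictMono.comp cT.strictMono
    have e2 : (fun v : Fin (j - k - l) => cU (Fin.cast h₂.symm v)) = Uᶜ.orderEmbOfFin hUc := by
      apply Finset.orderEmbOfFin_unique hUc
      · intro v; exact Finset.orderEmbOfFin_mem _ _ _
      · exact cU.strictMono.comp (Fin.cast_strictMono _)
    intro v
    rw [show e (cT v) = (fun v : Fin (j - k - l) => e (cT v)) v from rfl, e1, ← e2]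
  -- the first factors agree up to a permutation
  set g1 : Fin (k + l) → Fin j := Fin.append (⇑eS) (⇑e ∘ ⇑eT) with hg1
  have hg1inj : Function.Injective g1 := by
    apply append_injective eS.injective (e.injective.comp eT.injective)
    intro p q hpq
    have h1 : eS p ∈ S := Finset.orderEmbOfFin_mem _ _ p
    have h2 : (⇑e ∘ ⇑eT) q ∈ Sᶜ := hmem_e _
    rw [← hpq] at h2
    exact Finset.mem_compl.mp h2 h1
  have hrange : Set.range g1 = Set.range (⇑eU) := by
    rw [hg1, range_append, Finset.range_orderEmbOfFin, Finset.range_orderEmbOfFin,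
      Set.range_comp, Finset.range_orderEmbOfFin]
    rw [hUdef, Finset.coe_union, Finset.coe_map]
    rfl
  obtain ⟨π, hπ⟩ := exists_perm_comp g1 (⇑eU) hg1inj eU.injective hrange
  obtain ⟨σ, hσ⟩ := append_comp_perm x (y ∘ ⇑eU) π
  -- now prove the tensor equality
  show wedge (i + k + l)
      (Fin.append (Fin.append x (y ∘ ⇑eS)) ((y ∘ ⇑e) ∘ ⇑eT) ∘ Fin.cast rfl) ⊗ₜ
    wedge (j - k - l) (((y ∘ ⇑e) ∘ ⇑cT) ∘ Fin.cast rfl)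
    = wedge (i + k + l) (Fin.append x (y ∘ ⇑eU) ∘ Fin.cast h₁.symm) ⊗ₜ
      wedge (j - k - l) ((y ∘ ⇑cU) ∘ Fin.cast h₂.symm)
  have hB : Fin.append (y ∘ ⇑eS) ((y ∘ ⇑e) ∘ ⇑eT) = y ∘ g1 :=
    (comp_append y (⇑eS) (⇑e ∘ ⇑eT)).symm
  have hA : Fin.append (Fin.append x (y ∘ ⇑eS)) ((y ∘ ⇑e) ∘ ⇑eT)
      = (Fin.append x (y ∘ ⇑eU) ∘ σ) ∘ Fin.cast (Nat.add_assoc i k l) := by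
    rw [Fin.append_assoc, hB, hπ]
    rw [show y ∘ (⇑eU ∘ ⇑π) = (y ∘ ⇑eU) ∘ ⇑π from rfl, hσ]
  have step : Fin.append (Fin.append x (y ∘ ⇑eS)) ((y ∘ ⇑e) ∘ ⇑eT) ∘
      Fin.cast (rfl : i + k + l = i + k + l)
      = ((Fin.append x (y ∘ ⇑eU)) ∘ ⇑σ) ∘ Fin.cast h₁.symm := hA
  have hfst : wedge (i + k + l)
      (Fin.append (Fin.append x (y ∘ ⇑eS)) ((y ∘ ⇑e) ∘ ⇑eT) ∘ Fin.cast rfl) =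
      wedge (i + k + l) (Fin.append x (y ∘ ⇑eU) ∘ Fin.cast h₁.symm) := by
    rw [step]
    exact wedge_comp_cast_perm h₁ _ σ
  have hsnd2 : wedge (j - k - l) (((y ∘ ⇑e) ∘ ⇑cT) ∘ Fin.cast rfl) =
      wedge (j - k - l) ((y ∘ ⇑cU) ∘ Fin.cast h₂.symm) :=
    congrArg (wedge (j - k - l)) (funext fun v => congrArg y (hsnd v))
  rw [hfst, hsnd2]

/-- Merge a `k`-subset `S` of `Fin j` and an `l`-subset of `Fin (j - k)` (read inside `Sᶜ`)
into a `(k+l)`-subset of `Fin j`. -/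
def Phi (j k : ℕ) (p : Finset (Fin j) × Finset (Fin (j - k))) : Finset (Fin j) :=
  if h : p.1.card = k then
    p.1 ∪ p.2.map ((p.1)ᶜ.orderEmbOfFin (card_compl_eq h)).toEmbedding
  else ∅

lemma Phi_eq {j k : ℕ} {S : Finset (Fin j)} (hS : S.card = k) (T : Finset (Fin (j - k))) :
    Phi j k (S, T) = S ∪ T.map (Sᶜ.orderEmbOfFin (card_compl_eq hS)).toEmbedding :=
  dif_pos hS

lemma map_subset_compl {j k : ℕ} {S : Finset (Fin j)} (hS : S.card = k)
    (T : Finset (Fin (j - k))) {v : Fin j}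
    (hv : v ∈ T.map (Sᶜ.orderEmbOfFin (card_compl_eq hS)).toEmbedding) : v ∈ Sᶜ := by
  obtain ⟨t, _, rfl⟩ := Finset.mem_map.mp hv
  exact Finset.orderEmbOfFin_mem _ _ t

lemma Phi_card {j k l : ℕ} {S : Finset (Fin j)} (hS : S.card = k)
    {T : Finset (Fin (j - k))} (hT : T.card = l) :
    (Phi j k (S, T)).card = k + l := by
  rw [Phi_eq hS]
  rw [Finset.card_union_of_disjoint, hS, Finset.card_map, hT]
  rw [Finset.disjoint_left]
  intro v hvS hvm
  exact Finset.mem_compl.mp (map_subset_compl hS T hvm) hvS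

lemma map_eq_sdiff {j k : ℕ} {S : Finset (Fin j)} (hS : S.card = k)
    {T : Finset (Fin (j - k))} {U : Finset (Fin j)} (hPhi : Phi j k (S, T) = U) :
    T.map (Sᶜ.orderEmbOfFin (card_compl_eq hS)).toEmbedding = U \ S := by
  rw [Phi_eq hS] at hPhi
  ext v
  rw [Finset.mem_sdiff]
  constructor
  · intro hv
    refine ⟨hPhi ▸ Finset.mem_union_right _ hv, ?_⟩
    exact Finset.mem_compl.mp (map_subset_compl hS T hv)
  · rintro ⟨hvU, hvS⟩
    rw [← hPhi] at hvU
    rcases Finset.mem_union.mp hvU with h | h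
    · exact (hvS h).elim
    · exact h

lemma fiber_card {j k l : ℕ} (U : Finset (Fin j)) (hU : U.card = k + l) :
    ((Finset.filter (fun p => Phi j k p = U)
      (Finset.powersetCard k (Finset.univ : Finset (Fin j)) ×ˢ
        Finset.powersetCard l (Finset.univ : Finset (Fin (j - k)))))).card
      = (k + l).choose k := by
  rw [← hU, ← Finset.card_powersetCard k U]
  apply Finset.card_bij (fun p _ => p.1)
  · -- maps to powersetCard k U
    intro p hp
    rw [Finset.mem_filter, Finset.mem_product, Finset.mem_powersetCard_univ,
      Finset.mem_powersetCard_univ] at hp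
    obtain ⟨⟨hp1, _⟩, hPhi⟩ := hp
    rw [Finset.mem_powersetCard]
    refine ⟨?_, hp1⟩
    rw [← hPhi, Phi_eq hp1]
    exact Finset.subset_union_left
  · -- injective
    intro p hp q hq hpq
    rw [Finset.mem_filter, Finset.mem_product, Finset.mem_powersetCard_univ,
      Finset.mem_powersetCard_univ] at hp hq
    obtain ⟨⟨hp1, _⟩, hPhip⟩ := hp
    obtain ⟨⟨hq1, _⟩, hPhiq⟩ := hq
    have h1 := map_eq_sdiff hp1 hPhip
    have h2 := map_eq_sdiff hq1 hPhiq
    obtain ⟨S, T⟩ := p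
    obtain ⟨S', T'⟩ := q
    simp only at hpq h1 h2
    subst hpq
    have : T.map (Sᶜ.orderEmbOfFin (card_compl_eq hp1)).toEmbedding
        = T'.map (Sᶜ.orderEmbOfFin (card_compl_eq hp1)).toEmbedding := by rw [h1, h2]
    have hTT : T = T' := Finset.map_injective _ this
    rw [hTT]
  · -- surjective
    intro S hSmem
    rw [Finset.mem_powersetCard] at hSmem
    obtain ⟨hSU, hSk⟩ := hSmem
    set e := Sᶜ.orderEmbOfFin (card_compl_eq hSk) with he
    set T : Finset (Fin (j - k)) := Finset.filter (fun t => e t ∈ U) Finset.univ with hTdef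
    have hmap : T.map e.toEmbedding = U \ S := by
      ext v
      rw [Finset.mem_sdiff]
      constructor
      · intro hv
        obtain ⟨t, ht, rfl⟩ := Finset.mem_map.mp hv
        rw [hTdef, Finset.mem_filter] at ht
        refine ⟨ht.2, Finset.mem_compl.mp (Finset.orderEmbOfFin_mem _ _ t)⟩
      · rintro ⟨hvU, hvS⟩
        have : v ∈ Sᶜ := Finset.mem_compl.mpr hvS
        have : v ∈ Set.range ⇑e := by rw [Finset.range_orderEmbOfFin]; exact this
        obtain ⟨t, rfl⟩ := this
        refine Finset.mem_map.mpr ⟨t, ?_, rfl⟩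
        rw [hTdef, Finset.mem_filter]
        exact ⟨Finset.mem_univ t, hvU⟩
    have hTcard : T.card = l := by
      have := congrArg Finset.card hmap
      rw [Finset.card_map, Finset.card_sdiff_of_subset hSU, hU, hSk] at this
      omega
    have hPhi : Phi j k (S, T) = U := by
      rw [Phi_eq hSk]
      rw [show T.map ((Sᶜ.orderEmbOfFin (card_compl_eq hSk)).toEmbedding) = U \ S from hmap]
      exact Finset.union_sdiff_of_subset hSU
    refine ⟨(S, T), ?_, rfl⟩
    rw [Finset.mem_filter, Finset.mem_product, Finset.mem_powersetCard_univ,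
      Finset.mem_powersetCard_univ]
    exact ⟨⟨hSk, hTcard⟩, hPhi⟩

lemma step2 {i j k l : ℕ}
    (θ₂ : (⋀[F2]^(i + k) V) ⊗[F2] (⋀[F2]^(j - k) V) →ₗ[F2]
      (⋀[F2]^(i + k + l) V) ⊗[F2] (⋀[F2]^(j - k - l) V))
    (hθ₂ : IsTheta (i + k) (j - k) l rfl rfl θ₂)
    (h₁ : i + (k + l) = i + k + l) (h₂ : j - (k + l) = j - k - l)
    (x : Fin i → V) (y : Fin j → V)
    (S : Finset (Fin j)) (hSk : S.card = k) :
    θ₂ (thetaTerm i j k (i + k) (j - k) rfl rfl x y S) =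
      ∑ T ∈ Finset.powersetCard l (Finset.univ : Finset (Fin (j - k))),
        thetaTerm i j (k + l) (i + k + l) (j - k - l) h₁ h₂ x y (Phi j k (S, T)) := by
  rw [thetaTerm_eq hSk]
  have h0 : θ₂ (thetaTermC i j k (i + k) (j - k) rfl rfl x y S hSk) =
      ∑ T ∈ Finset.powersetCard l (Finset.univ : Finset (Fin (j - k))),
        thetaTerm (i + k) (j - k) l (i + k + l) (j - k - l) rfl rfl
          (Fin.append x (y ∘ (S.orderEmbOfFin hSk)))
          (y ∘ (Sᶜ.orderEmbOfFin (card_compl_eq hSk))) T :=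
    isTheta_sum hθ₂ _ _
  rw [h0]
  refine Finset.sum_congr rfl fun T hT => ?_
  have hTl : T.card = l := Finset.mem_powersetCard_univ.mp hT
  have hUcard : (S ∪ T.map (Sᶜ.orderEmbOfFin (card_compl_eq hSk)).toEmbedding).card
      = k + l := by
    have := Phi_card hSk hTl
    rwa [Phi_eq hSk] at this
  rw [thetaTerm_eq hTl, Phi_eq hSk, thetaTerm_eq hUcard]
  exact key x y S hSk T hTl h₁ h₂ hUcard

end ThetaAux

set_option maxHeartbeats 4000000 in
set_option synthInstance.maxHeartbeats 1000000 in
/-- `θ_{i+k, j−k, l} ∘ θ_{i,j,k} = C(k+l, k) · θ_{i,j,k+l}` (mod 2). -/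
theorem theta_comp_theta {V : Type*} [AddCommGroup V] [Module F2 V]
    (i j k l : ℕ) (hkl : k + l ≤ j)
    (θ₁ : (⋀[F2]^i V) ⊗[F2] (⋀[F2]^j V) →ₗ[F2] (⋀[F2]^(i + k) V) ⊗[F2] (⋀[F2]^(j - k) V))
    (hθ₁ : IsTheta i j k rfl rfl θ₁)
    (θ₂ : (⋀[F2]^(i + k) V) ⊗[F2] (⋀[F2]^(j - k) V) →ₗ[F2]
      (⋀[F2]^(i + k + l) V) ⊗[F2] (⋀[F2]^(j - k - l) V))
    (hθ₂ : IsTheta (i + k) (j - k) l rfl rfl θ₂)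
    (θ₃ : (⋀[F2]^i V) ⊗[F2] (⋀[F2]^j V) →ₗ[F2]
      (⋀[F2]^(i + k + l) V) ⊗[F2] (⋀[F2]^(j - k - l) V))
    (hθ₃ : IsTheta i j (k + l) (by omega) (by omega) θ₃) :
    θ₂ ∘ₗ θ₁ = (((k + l).choose k : F2)) • θ₃ := by
  have h₁ : i + (k + l) = i + k + l := by omega
  have h₂ : j - (k + l) = j - k - l := by omega
  apply ThetaAux.ext_of_wedge
  intro x y
  rw [LinearMap.comp_apply, LinearMap.smul_apply]
  rw [ThetaAux.isTheta_sum hθ₁ x y, map_sum, ThetaAux.isTheta_sum hθ₃ x y]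
  have hmaps : ∀ p ∈ (Finset.powersetCard k (Finset.univ : Finset (Fin j)) ×ˢ
      Finset.powersetCard l (Finset.univ : Finset (Fin (j - k)))),
      ThetaAux.Phi j k p ∈ Finset.powersetCard (k + l) (Finset.univ : Finset (Fin j)) := by
    intro p hp
    rw [Finset.mem_product, Finset.mem_powersetCard_univ, Finset.mem_powersetCard_univ] at hp
    obtain ⟨S, T⟩ := p
    exact Finset.mem_powersetCard_univ.mpr (ThetaAux.Phi_card hp.1 hp.2)
  calc
    ∑ S ∈ Finset.powersetCard k (Finset.univ : Finset (Fin j)),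
        θ₂ (ThetaAux.thetaTerm i j k (i + k) (j - k) rfl rfl x y S)
      = ∑ S ∈ Finset.powersetCard k (Finset.univ : Finset (Fin j)),
          ∑ T ∈ Finset.powersetCard l (Finset.univ : Finset (Fin (j - k))),
            ThetaAux.thetaTerm i j (k + l) (i + k + l) (j - k - l) h₁ h₂ x y
              (ThetaAux.Phi j k (S, T)) :=
        Finset.sum_congr rfl fun S hS =>
          ThetaAux.step2 θ₂ hθ₂ h₁ h₂ x y S (Finset.mem_powersetCard_univ.mp hS)
    _ = ∑ p ∈ (Finset.powersetCard k (Finset.univ : Finset (Fin j)) ×ˢ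
          Finset.powersetCard l (Finset.univ : Finset (Fin (j - k)))),
            ThetaAux.thetaTerm i j (k + l) (i + k + l) (j - k - l) h₁ h₂ x y
              (ThetaAux.Phi j k p) :=
        (Finset.sum_product _ _ (fun p => ThetaAux.thetaTerm i j (k + l) (i + k + l)
          (j - k - l) h₁ h₂ x y (ThetaAux.Phi j k p))).symm
    _ = ∑ U ∈ Finset.powersetCard (k + l) (Finset.univ : Finset (Fin j)),
          ∑ p ∈ Finset.filter (fun p => ThetaAux.Phi j k p = U)
            (Finset.powersetCard k (Finset.univ : Finset (Fin j)) ×ˢ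
              Finset.powersetCard l (Finset.univ : Finset (Fin (j - k)))),
            ThetaAux.thetaTerm i j (k + l) (i + k + l) (j - k - l) h₁ h₂ x y
              (ThetaAux.Phi j k p) :=
        (Finset.sum_fiberwise_of_maps_to hmaps _).symm
    _ = ∑ U ∈ Finset.powersetCard (k + l) (Finset.univ : Finset (Fin j)),
          (((k + l).choose k : F2)) •
            ThetaAux.thetaTerm i j (k + l) (i + k + l) (j - k - l) h₁ h₂ x y U := by
        refine Finset.sum_congr rfl fun U hU => ?_
        have hUc : U.card = k + l := Finset.mem_powersetCard_univ.mp hU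
        rw [Finset.sum_congr rfl (fun p hp =>
          congrArg (ThetaAux.thetaTerm i j (k + l) (i + k + l) (j - k - l) h₁ h₂ x y)
            ((Finset.mem_filter.mp hp).2)),
          Finset.sum_const, ThetaAux.fiber_card U hUc, ← Nat.cast_smul_eq_nsmul F2]
    _ = (((k + l).choose k : F2)) •
          ∑ U ∈ Finset.powersetCard (k + l) (Finset.univ : Finset (Fin j)),
            ThetaAux.thetaTerm i j (k + l) (i + k + l) (j - k - l) h₁ h₂ x y U :=
        (Finset.smul_sum).symm

end
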